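/- Let q ≤ −4 and let L_{1,q,−2} be the (|q|+3)×(|q|+3) linking matrix from the paper. Then coker(L_{1,q,−2}) ≅ ℤ/(|q|−2), with μ₁ = μ₂ = −μ₃ in the cokernel, and the rational solution b of L_{1,q,−2} b = (1,1,0,…,0)ᵀ satisfies bᵀ L_{1,q,−2} b = −2|q|/(|q|−2). -/

import Mathlib

/-- The cokernel `ℤⁿ / M ℤⁿ` of a square integer matrix `M`. -/
abbrev matrixCoker {n : ℕ} (M : Matrix (Fin n) (Fin n) ℤ) :=
  (Fin n → ℤ) ⧸ LinearMap.range M.mulVecLin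

/-- The class `μ_i` of the `i`-th standard basis vector in the cokernel of `M`. -/
def mu {n : ℕ} (M : Matrix (Fin n) (Fin n) ℤ) (i : Fin n) : matrixCoker M :=
  Submodule.Quotient.mk (Pi.single i 1)

/-- The `(|q|+3) × (|q|+3)` linking matrix `L_{1,q,-2}` (over a commutative ring `R`):
two `-1`-framed components linking each other twice (rows 1–2) and linking each of the
`|q|+1` components of the `q`-family (which form the block `A_{|q|}`: zero diagonal,
`-1` off-diagonal) once. -/
def L13mat (R : Type*) [CommRing R] (s : ℕ) : Matrix (Fin (s + 3)) (Fin (s + 3)) R :=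
  Matrix.of fun i j =>
    if (i : ℕ) ≤ 1 ∧ (j : ℕ) ≤ 1 then (if i = j then -1 else -2)
    else if (i : ℕ) ≤ 1 ∨ (j : ℕ) ≤ 1 then -1
    else if i = j then 0 else -1

/-- The rational solution `b = (-|q|/(|q|-2), -|q|/(|q|-2), 2/(|q|-2), …, 2/(|q|-2))`. -/
def b13vec (s : ℕ) : Fin (s + 3) → ℚ := fun i =>
  if (i : ℕ) ≤ 1 then -(s : ℚ) / (s - 2) else 2 / ((s : ℚ) - 2)

/-- The rotation vector `(1,1,0,…,0)`. -/
def rot13vec (s : ℕ) : Fin (s + 3) → ℚ := fun i => if (i : ℕ) ≤ 1 then 1 else 0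

/-! ### Auxiliary machinery -/

namespace L13aux

/-- The set of "tail" indices `{2, …, s+2}`. -/
def tailT (s : ℕ) : Finset (Fin (s+3)) := Finset.univ.filter (fun j => 2 ≤ (j:ℕ))

lemma tailT_eq (s : ℕ) : tailT s = ({0, 1} : Finset (Fin (s+3)))ᶜ := by
  ext j
  simp only [tailT, Finset.mem_filter, Finset.mem_univ, true_and, Finset.mem_compl,
    Finset.mem_insert, Finset.mem_singleton, Fin.ext_iff, Fin.val_zero, Fin.val_one]
  omega

lemma h01 (s : ℕ) : (0 : Fin (s+3)) ≠ 1 := by simp [Fin.ext_iff]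

lemma card_tailT (s : ℕ) : (tailT s).card = s + 1 := by
  rw [tailT_eq, Finset.card_compl, Finset.card_pair (h01 s)]
  simp

lemma mem_tailT {s : ℕ} {j : Fin (s+3)} : j ∈ tailT s ↔ 2 ≤ (j:ℕ) := by
  simp [tailT]

lemma sum_split {R : Type*} [AddCommMonoid R] (s : ℕ) (g : Fin (s+3) → R) :
    ∑ j, g j = g 0 + g 1 + ∑ j ∈ tailT s, g j := by
  rw [tailT_eq, ← Finset.sum_add_sum_compl ({0,1} : Finset (Fin (s+3))),
    Finset.sum_pair (h01 s)]

lemma L13_apply {R : Type*} [CommRing R] (s : ℕ) (i j : Fin (s+3)) :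
    L13mat R s i j = -1 - (if ((i:ℕ) = 0 ∧ (j:ℕ) = 1) ∨ ((i:ℕ) = 1 ∧ (j:ℕ) = 0) then 1 else 0)
      + (if i = j ∧ 2 ≤ (i:ℕ) then 1 else 0) := by
  simp only [L13mat, Matrix.of_apply, Fin.ext_iff]
  split_ifs <;> first | ring1 | (exfalso; omega)

/-- Master formula for a row of `L13mat` applied to a vector. -/
lemma L13_mulVec {R : Type*} [CommRing R] (s : ℕ) (v : Fin (s+3) → R) (i : Fin (s+3)) :
    (L13mat R s).mulVec v i =
      -(∑ j, v j) + (if (i:ℕ) = 0 then -(v 1) else if (i:ℕ) = 1 then -(v 0) else v i) := by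
  classical
  unfold Matrix.mulVec dotProduct
  have key : ∀ j, L13mat R s i j * v j
      = -(v j) + ((if ((i:ℕ) = 0 ∧ (j:ℕ) = 1) ∨ ((i:ℕ) = 1 ∧ (j:ℕ) = 0) then -(v j) else 0)
        + (if i = j ∧ 2 ≤ (i:ℕ) then v j else 0)) := by
    intro j
    rw [L13_apply]
    split_ifs <;> ring
  rw [Finset.sum_congr rfl (fun j _ => key j), Finset.sum_add_distrib, Finset.sum_neg_distrib,
    Finset.sum_add_distrib]
  congr 1
  rcases Nat.lt_or_ge (i:ℕ) 2 with hi | hi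
  · rcases (by omega : (i:ℕ) = 0 ∨ (i:ℕ) = 1) with h | h
    · -- i = 0
      have e1 : ∑ j : Fin (s+3), (if ((i:ℕ) = 0 ∧ (j:ℕ) = 1) ∨ ((i:ℕ) = 1 ∧ (j:ℕ) = 0) then -(v j) else 0)
          = -(v 1) := by
        rw [Finset.sum_eq_single (1 : Fin (s+3))]
        · simp [h]
        · intro j _ hj
          have : (j : ℕ) ≠ 1 := by simpa [Fin.ext_iff] using hj
          simp; omega
        · simp
      have e2 : ∑ j : Fin (s+3), (if i = j ∧ 2 ≤ (i:ℕ) then v j else 0) = 0 := by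
        apply Finset.sum_eq_zero; intro j _; simp; omega
      rw [e1, e2, h]
      simp
    · -- i = 1
      have e1 : ∑ j : Fin (s+3), (if ((i:ℕ) = 0 ∧ (j:ℕ) = 1) ∨ ((i:ℕ) = 1 ∧ (j:ℕ) = 0) then -(v j) else 0)
          = -(v 0) := by
        rw [Finset.sum_eq_single (0 : Fin (s+3))]
        · simp [h]
        · intro j _ hj
          have : (j : ℕ) ≠ 0 := fun h => hj (Fin.ext h)
          simp; omega
        · simp
      have e2 : ∑ j : Fin (s+3), (if i = j ∧ 2 ≤ (i:ℕ) then v j else 0) = 0 := by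
        apply Finset.sum_eq_zero; intro j _; simp; omega
      rw [e1, e2, h]
      simp
  · have e1 : ∑ j : Fin (s+3), (if ((i:ℕ) = 0 ∧ (j:ℕ) = 1) ∨ ((i:ℕ) = 1 ∧ (j:ℕ) = 0) then -(v j) else 0)
        = 0 := by
      apply Finset.sum_eq_zero; intro j _; exact if_neg (by omega)
    have e2 : ∑ j : Fin (s+3), (if i = j ∧ 2 ≤ (i:ℕ) then v j else 0) = v i := by
      simp only [hi, and_true]
      simp [Finset.sum_ite_eq]
    rw [e1, e2]
    have h0 : (i:ℕ) ≠ 0 := by omega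
    have h1 : (i:ℕ) ≠ 1 := by omega
    simp [h0, h1]

/-- The weight vector `c = (1,1,-1,…,-1)`. -/
def cvec (s : ℕ) : Fin (s+3) → ℤ := fun j => if (j:ℕ) ≤ 1 then 1 else -1

lemma val0 (s : ℕ) : ((0 : Fin (s+3)) : ℕ) = 0 := rfl
lemma val1 (s : ℕ) : ((1 : Fin (s+3)) : ℕ) = 1 := by simp
lemma val2 (s : ℕ) : ((2 : Fin (s+3)) : ℕ) = 2 := by simp

lemma sum_cvec (s : ℕ) : ∑ j, cvec s j = 1 - (s : ℤ) := by
  rw [sum_split]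
  have ht : ∑ j ∈ tailT s, cvec s j = (s + 1 : ℕ) • (-1 : ℤ) := by
    rw [← card_tailT s, ← Finset.sum_const]
    apply Finset.sum_congr rfl
    intro j hj
    have := mem_tailT.mp hj
    simp [cvec]; omega
  rw [ht]
  simp [cvec, val0, val1]
  push_cast
  ring

/-- `cᵀ L = (s-2) 𝟙`. -/
lemma mulVec_cvec (s : ℕ) (j : Fin (s+3)) :
    (L13mat ℤ s).mulVec (cvec s) j = (s : ℤ) - 2 := by
  rw [L13_mulVec, sum_cvec]
  have hc0 : cvec s 0 = 1 := by simp [cvec, val0]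
  have hc1 : cvec s 1 = 1 := by simp [cvec, val1]
  rcases Nat.lt_or_ge (j:ℕ) 2 with hj | hj
  · rcases (by omega : (j:ℕ) = 0 ∨ (j:ℕ) = 1) with h | h <;> simp [h, hc0, hc1] <;> ring
  · have h0 : (j:ℕ) ≠ 0 := by omega
    have h1 : (j:ℕ) ≠ 1 := by omega
    have : cvec s j = -1 := by simp [cvec]; omega
    simp [h0, h1, this]
    ring

lemma L13_symm {R : Type*} [CommRing R] (s : ℕ) (i j : Fin (s+3)) :
    L13mat R s i j = L13mat R s j i := by
  rw [L13_apply, L13_apply]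
  have e1 : (((i:ℕ) = 0 ∧ (j:ℕ) = 1) ∨ ((i:ℕ) = 1 ∧ (j:ℕ) = 0))
      ↔ (((j:ℕ) = 0 ∧ (i:ℕ) = 1) ∨ ((j:ℕ) = 1 ∧ (i:ℕ) = 0)) := by tauto
  have e2 : (i = j ∧ 2 ≤ (i:ℕ)) ↔ (j = i ∧ 2 ≤ (j:ℕ)) := by
    constructor <;> rintro ⟨rfl, h⟩ <;> exact ⟨rfl, h⟩
  rw [if_congr e1 rfl rfl, if_congr e2 rfl rfl]

end L13aux

open L13aux in
/-- All the conclusions, for any `s ≥ 4`. -/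
theorem L13main (s : ℕ) (hs : 4 ≤ s) :
    Nonempty (matrixCoker (L13mat ℤ s) ≃+ ZMod (s - 2)) ∧
      mu (L13mat ℤ s) 0 = mu (L13mat ℤ s) 1 ∧
      mu (L13mat ℤ s) 1 = -mu (L13mat ℤ s) 2 ∧
      (L13mat ℚ s).mulVec (b13vec s) = rot13vec s ∧
      dotProduct (b13vec s) ((L13mat ℚ s).mulVec (b13vec s)) =
        -(2 * (s : ℚ)) / ((s : ℚ) - 2) := by
  classical
  haveI : NeZero (s - 2) := ⟨by omega⟩
  have hcast : ((s - 2 : ℕ) : ℤ) = (s : ℤ) - 2 := by omega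
  -- the ℚ-facts first
  have hs2 : ((s : ℚ) - 2) ≠ 0 := by
    have : (4 : ℚ) ≤ (s : ℚ) := by exact_mod_cast Nat.cast_le.mpr hs
    intro h; nlinarith
  have hb0 : b13vec s 0 = -(s:ℚ) / (s - 2) := by simp [b13vec, val0]
  have hb1 : b13vec s 1 = -(s:ℚ) / (s - 2) := by simp [b13vec, val1]
  have hsumb : ∑ j, b13vec s j = 2 * (-(s:ℚ) / (s - 2)) + (s + 1 : ℚ) * (2 / ((s:ℚ) - 2)) := by
    rw [sum_split, hb0, hb1]
    have ht : ∑ j ∈ tailT s, b13vec s j = (s + 1 : ℕ) • (2 / ((s:ℚ) - 2)) := by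
      rw [← card_tailT s, ← Finset.sum_const]
      apply Finset.sum_congr rfl
      intro j hj
      have := mem_tailT.mp hj
      simp [b13vec]; omega
    rw [ht]
    push_cast
    ring
  have hmv : (L13mat ℚ s).mulVec (b13vec s) = rot13vec s := by
    funext i
    rw [L13_mulVec, hsumb]
    unfold rot13vec
    rcases Nat.lt_or_ge (i:ℕ) 2 with hi | hi
    · rcases (by omega : (i:ℕ) = 0 ∨ (i:ℕ) = 1) with h | h <;>
        · simp [h, hb0, hb1]
          field_simp
          ring
    · have h0 : (i:ℕ) ≠ 0 := by omega
      have h1 : (i:ℕ) ≠ 1 := by omega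
      have hbi : b13vec s i = 2 / ((s:ℚ) - 2) := by simp [b13vec]; omega
      have hif : ¬ (i:ℕ) ≤ 1 := by omega
      simp [h0, h1, hbi, hif]
      field_simp
      ring
  have hdot : dotProduct (b13vec s) ((L13mat ℚ s).mulVec (b13vec s)) =
      -(2 * (s : ℚ)) / ((s : ℚ) - 2) := by
    rw [hmv]
    unfold dotProduct
    rw [sum_split]
    have ht : ∑ j ∈ tailT s, b13vec s j * rot13vec s j = 0 := by
      apply Finset.sum_eq_zero
      intro j hj
      have := mem_tailT.mp hj
      simp [rot13vec]; omega
    have hr0 : rot13vec s 0 = 1 := by simp [rot13vec, val0]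
    have hr1 : rot13vec s 1 = 1 := by simp [rot13vec, val1]
    rw [ht, hr0, hr1, hb0, hb1]
    field_simp
    ring
  -- integral facts
  set M := L13mat ℤ s with hM
  -- μ₀ = μ₁
  have hmu01 : mu M 0 = mu M 1 := by
    rw [mu, mu, Submodule.Quotient.eq]
    refine ⟨((Pi.single 0 1 - Pi.single 1 1 : Fin (s+3) → ℤ)), ?_⟩
    rw [Matrix.mulVecLin_apply]
    funext i
    rw [L13_mulVec]
    have hsum : ∑ j : Fin (s+3), ((Pi.single 0 1 - Pi.single 1 1 : Fin (s+3) → ℤ)) j = 0 := by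
      simp [Finset.sum_sub_distrib]
    rw [hsum]
    have e0 : ((Pi.single 0 1 - Pi.single 1 1 : Fin (s+3) → ℤ)) 0 = 1 := by
      simp [Pi.single_apply, (h01 s).symm]
    have e1 : ((Pi.single 0 1 - Pi.single 1 1 : Fin (s+3) → ℤ)) 1 = -1 := by
      simp [Pi.single_apply, h01 s]
    rcases Nat.lt_or_ge (i:ℕ) 2 with hi | hi
    · rcases (by omega : (i:ℕ) = 0 ∨ (i:ℕ) = 1) with h | h <;>
        · have hieq : i = 0 ∨ i = 1 := by
            rcases (by omega : (i:ℕ) = 0 ∨ (i:ℕ) = 1) with h' | h'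
            · left; apply Fin.ext; simp [h', val0]
            · right; apply Fin.ext; simp [h', val1]
          rcases hieq with rfl | rfl <;>
            simp_all [e0, e1, Pi.single_apply, val0, val1]
    · have h0 : (i:ℕ) ≠ 0 := by omega
      have h1 : (i:ℕ) ≠ 1 := by omega
      have hi0 : i ≠ 0 := by intro h; rw [h] at h0; exact h0 (val0 s)
      have hi1 : i ≠ 1 := by intro h; rw [h] at h1; exact h1 (val1 s)
      simp [h0, h1, Pi.single_apply, hi0, hi1]
  -- μ₁ = -μ₂
  have hmu12 : mu M 1 = -mu M 2 := by
    rw [mu, mu, ← Submodule.Quotient.mk_neg, Submodule.Quotient.eq]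
    refine ⟨((Pi.single 2 1 - Pi.single 0 1 : Fin (s+3) → ℤ)), ?_⟩
    rw [Matrix.mulVecLin_apply]
    funext i
    rw [L13_mulVec]
    have hsum : ∑ j : Fin (s+3), ((Pi.single 2 1 - Pi.single 0 1 : Fin (s+3) → ℤ)) j = 0 := by
      simp [Finset.sum_sub_distrib]
    rw [hsum]
    have h02 : (0 : Fin (s+3)) ≠ 2 := by
      intro h
      have := congrArg (Fin.val) h
      rw [val0, val2] at this; omega
    have h12 : (1 : Fin (s+3)) ≠ 2 := by
      intro h
      have := congrArg (Fin.val) h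
      rw [val1, val2] at this; omega
    have e0 : ((Pi.single 2 1 - Pi.single 0 1 : Fin (s+3) → ℤ)) 0 = -1 := by
      simp [Pi.single_apply, h02]
    have e1 : ((Pi.single 2 1 - Pi.single 0 1 : Fin (s+3) → ℤ)) 1 = 0 := by
      simp [Pi.single_apply, h12, (h01 s).symm]
    rcases Nat.lt_or_ge (i:ℕ) 2 with hi | hi
    · have hieq : i = 0 ∨ i = 1 := by
        rcases (by omega : (i:ℕ) = 0 ∨ (i:ℕ) = 1) with h' | h'
        · left; apply Fin.ext; simp [h', val0]
        · right; apply Fin.ext; simp [h', val1]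
      rcases hieq with rfl | rfl
      · rw [e1]
        simp [Pi.single_apply, h02, (h01 s).symm, val0, val1]
      · rw [e0]
        simp [Pi.single_apply, h12, h01 s, val0, val1]
    · have h0 : (i:ℕ) ≠ 0 := by omega
      have h1 : (i:ℕ) ≠ 1 := by omega
      have hi0 : i ≠ 0 := by intro h; rw [h] at h0; exact h0 (val0 s)
      have hi1 : i ≠ 1 := by intro h; rw [h] at h1; exact h1 (val1 s)
      simp [h0, h1, Pi.single_apply, hi0, hi1, sub_eq_add_neg]
  -- the cokernel
  have hcoker : Nonempty (matrixCoker M ≃+ ZMod (s - 2)) := by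
    -- the linear functional
    let f : (Fin (s+3) → ℤ) →ₗ[ℤ] ZMod (s - 2) :=
      { toFun := fun v => ((∑ j, cvec s j * v j : ℤ) : ZMod (s - 2))
        map_add' := by
          intro x y
          have h : (∑ j, cvec s j * (x + y) j) = (∑ j, cvec s j * x j) + (∑ j, cvec s j * y j) := by
            rw [← Finset.sum_add_distrib]
            apply Finset.sum_congr rfl
            intro j _
            simp [mul_add]
          simp only [h, Int.cast_add]
        map_smul' := by
          intro z v
          have h : (∑ j, cvec s j * (z • v) j) = z * ∑ j, cvec s j * v j := by
            rw [Finset.mul_sum]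
            apply Finset.sum_congr rfl
            intro j _
            simp only [Pi.smul_apply, smul_eq_mul]
            ring
          show ((∑ j, cvec s j * (z • v) j : ℤ) : ZMod (s - 2))
            = z • ((∑ j, cvec s j * v j : ℤ) : ZMod (s - 2))
          rw [h, Int.cast_mul, zsmul_eq_mul] }
    have hf_apply : ∀ v, f v = ((∑ j, cvec s j * v j : ℤ) : ZMod (s - 2)) := fun _ => rfl
    have hcol : ∀ v : Fin (s+3) → ℤ, ∑ j, cvec s j * M.mulVec v j
        = ((s:ℤ) - 2) * ∑ j, v j := by
      intro v
      unfold Matrix.mulVec dotProduct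
      rw [Finset.sum_congr rfl (fun i _ => by rw [Finset.mul_sum])]
      rw [Finset.sum_comm]
      rw [Finset.mul_sum]
      apply Finset.sum_congr rfl
      intro j _
      have : ∀ i, cvec s i * (M i j * v j) = (M j i * cvec s i) * v j := by
        intro i; rw [hM, L13_symm s j i]; ring
      rw [Finset.sum_congr rfl (fun i _ => this i), ← Finset.sum_mul]
      congr 1
      exact mulVec_cvec s j
    have hker : LinearMap.range M.mulVecLin = LinearMap.ker f := by
      apply le_antisymm
      · rintro x ⟨v, rfl⟩
        rw [LinearMap.mem_ker, Matrix.mulVecLin_apply, hf_apply, hcol]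
        rw [← hcast]
        push_cast
        simp
      · intro v hv
        rw [LinearMap.mem_ker, hf_apply, ZMod.intCast_zmod_eq_zero_iff_dvd] at hv
        obtain ⟨k, hk⟩ := hv
        rw [hcast] at hk
        -- split the defining sum
        have hsumc : v 0 + v 1 - ∑ j ∈ tailT s, v j = ((s:ℤ) - 2) * k := by
          rw [← hk, sum_split]
          have hc0 : cvec s 0 = 1 := by simp [cvec, val0]
          have hc1 : cvec s 1 = 1 := by simp [cvec, val1]
          have ht : ∑ j ∈ tailT s, cvec s j * v j = -∑ j ∈ tailT s, v j := by
            rw [← Finset.sum_neg_distrib]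
            apply Finset.sum_congr rfl
            intro j hj
            have := mem_tailT.mp hj
            have : cvec s j = -1 := by simp [cvec]; omega
            rw [this]; ring
          rw [hc0, hc1, ht]
          ring
        -- explicit preimage
        refine ⟨fun j => if (j:ℕ) = 0 then -k - v 1
            else if (j:ℕ) = 1 then -k*((s:ℤ)-1) + v 1 - ∑ i ∈ tailT s, v i
            else k + v j, ?_⟩
        rw [Matrix.mulVecLin_apply]
        set u : Fin (s+3) → ℤ := fun j => if (j:ℕ) = 0 then -k - v 1
            else if (j:ℕ) = 1 then -k*((s:ℤ)-1) + v 1 - ∑ i ∈ tailT s, v i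
            else k + v j with hu
        have hu0 : u 0 = -k - v 1 := by simp [hu, val0]
        have hu1 : u 1 = -k*((s:ℤ)-1) + v 1 - ∑ i ∈ tailT s, v i := by simp [hu, val1]
        have hsumu : ∑ j, u j = k := by
          rw [sum_split, hu0, hu1]
          have ht : ∑ j ∈ tailT s, u j = (s+1 : ℕ) * k + ∑ j ∈ tailT s, v j := by
            have : ∀ j ∈ tailT s, u j = k + v j := by
              intro j hj
              have := mem_tailT.mp hj
              simp only [hu]
              rw [if_neg (show ¬ ((j:ℕ) = 0) by omega), if_neg (show ¬ ((j:ℕ) = 1) by omega)]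
            rw [Finset.sum_congr rfl this, Finset.sum_add_distrib, Finset.sum_const,
              card_tailT, nsmul_eq_mul]
          rw [ht]
          push_cast
          ring
        funext i
        rw [L13_mulVec, hsumu]
        rcases Nat.lt_or_ge (i:ℕ) 2 with hi | hi
        · have hieq : i = 0 ∨ i = 1 := by
            rcases (by omega : (i:ℕ) = 0 ∨ (i:ℕ) = 1) with h' | h'
            · left; apply Fin.ext; simp [h', val0]
            · right; apply Fin.ext; simp [h', val1]
          rcases hieq with rfl | rfl
          · rw [if_pos (val0 s), hu1]
            linarith [hsumc]
          · rw [if_neg (by rw [val1]; omega), if_pos (val1 s), hu0]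
            ring
        · have h0 : (i:ℕ) ≠ 0 := by omega
          have h1 : (i:ℕ) ≠ 1 := by omega
          rw [if_neg h0, if_neg h1]
          have : u i = k + v i := by simp only [hu]; rw [if_neg h0, if_neg h1]
          rw [this]
          ring
    have hsurj : Function.Surjective f := by
      intro x
      refine ⟨Pi.single (0 : Fin (s+3)) ((x.val : ℤ)), ?_⟩
      rw [hf_apply]
      have : ∑ j : Fin (s+3), cvec s j * (Pi.single 0 (x.val : ℤ) : Fin (s+3) → ℤ) j
          = cvec s 0 * (x.val : ℤ) := by
        rw [Finset.sum_eq_single (0 : Fin (s+3))]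
        · simp
        · intro j _ hj
          simp [Pi.single_apply, hj]
        · simp
      rw [this]
      have hc0 : cvec s 0 = 1 := by simp [cvec, val0]
      rw [hc0, one_mul]
      push_cast
      simp [ZMod.natCast_val, ZMod.cast_id]
    exact ⟨((Submodule.quotEquivOfEq _ _ hker).trans
      (f.quotKerEquivOfSurjective hsurj)).toAddEquiv⟩
  exact ⟨hcoker, hmu01, hmu12, hmv, hdot⟩

/-- For `q ≤ -4`: the cokernel of `L_{1,q,-2}` is `ℤ/(|q|-2)` with `μ₁ = μ₂ = -μ₃`,
and the rational solution `b` of `L_{1,q,-2} b = (1,1,0,…,0)ᵀ` satisfies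
`bᵀ L_{1,q,-2} b = -2|q|/(|q|-2)`. -/
theorem coker_and_csquare_L_one_q_minustwo (q : ℤ) (hq : q ≤ -4) :
    Nonempty (matrixCoker (L13mat ℤ q.natAbs) ≃+ ZMod (q.natAbs - 2)) ∧
      mu (L13mat ℤ q.natAbs) 0 = mu (L13mat ℤ q.natAbs) 1 ∧
      mu (L13mat ℤ q.natAbs) 1 = -mu (L13mat ℤ q.natAbs) 2 ∧
      (L13mat ℚ q.natAbs).mulVec (b13vec q.natAbs) = rot13vec q.natAbs ∧
      dotProduct (b13vec q.natAbs)
          ((L13mat ℚ q.natAbs).mulVec (b13vec q.natAbs)) =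
        -(2 * (q.natAbs : ℚ)) / ((q.natAbs : ℚ) - 2) := by
  have hs : 4 ≤ q.natAbs := by omega
  exact L13main q.natAbs hs
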